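/- Let σ be a positive semidefinite d×d complex matrix with trace 1, let 0 ≤ δ ≤ 1, and let X be a d×d complex matrix such that ‖X‖_{S1} + ‖σ − X‖_{S1} ≤ 1 + δ. Then ‖X − X_h‖_{S1} ≤ 3√δ, where X_h = (X + X*)/2 is the Hermitian part of X. -/

import Mathlib

open Matrix ComplexOrder

/-- The Frobenius norm of a complex square matrix: `(Tr(AᴴA))^{1/2}`. -/
noncomputable def frobNorm {d : ℕ} (A : Matrix (Fin d) (Fin d) ℂ) : ℝ :=
  Real.sqrt ((Aᴴ * A).trace.re)

/-- The Schatten-1 (nuclear) norm: the sum of singular values, i.e. `Tr((AᴴA)^{1/2})`. -/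
noncomputable def nucNorm {d : ℕ} (A : Matrix (Fin d) (Fin d) ℂ) : ℝ :=
  (((Matrix.isHermitian_conjTranspose_mul_self A).eigenvectorUnitary : Matrix (Fin d) (Fin d) ℂ) *
    diagonal (((↑) : ℝ → ℂ) ∘ (√·) ∘ (Matrix.isHermitian_conjTranspose_mul_self A).eigenvalues) *
    (star (Matrix.isHermitian_conjTranspose_mul_self A).eigenvectorUnitary :
      Matrix (Fin d) (Fin d) ℂ)).trace.re

variable {d : ℕ}

open scoped MatrixOrder

lemma nucNorm_eq_sqrt (A : Matrix (Fin d) (Fin d) ℂ) :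
    nucNorm A = (CFC.sqrt (Aᴴ * A)).trace.re := by
  rw [CFC.sqrt_eq_real_sqrt _ (Matrix.posSemidef_conjTranspose_mul_self A).nonneg, cfcₙ_eq_cfc,
    (Matrix.isHermitian_conjTranspose_mul_self A).cfc_eq]
  rfl

lemma trace_unitary_conj (V B : Matrix (Fin d) (Fin d) ℂ) (hV : Vᴴ * V = 1) :
    (V * B * Vᴴ).trace = B.trace := by
  rw [Matrix.trace_mul_cycle, hV, Matrix.one_mul]

lemma psd_trace_re_nonneg {A : Matrix (Fin d) (Fin d) ℂ} (hA : A.PosSemidef) :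
    0 ≤ A.trace.re := by
  exact (Complex.le_def.mp hA.trace_nonneg).1

lemma nucNorm_nonneg (A : Matrix (Fin d) (Fin d) ℂ) : 0 ≤ nucNorm A :=
  by rw [nucNorm_eq_sqrt]; exact psd_trace_re_nonneg (CFC.sqrt_nonneg _).posSemidef

lemma re_trace_mul_le_nucNorm (U A : Matrix (Fin d) (Fin d) ℂ)
    (hU1 : U * Uᴴ = 1) : (U * A).trace.re ≤ nucNorm A := by
  have hP := Matrix.posSemidef_conjTranspose_mul_self A
  set S := CFC.sqrt (Aᴴ * A) with hSdef
  have hS : S.PosSemidef := (CFC.sqrt_nonneg _).posSemidef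
  have hSsq : S * S = Aᴴ * A := CFC.sqrt_mul_sqrt_self _ hP.nonneg
  have hH : S.IsHermitian := hS.1
  set V : Matrix (Fin d) (Fin d) ℂ := (hH.eigenvectorUnitary : Matrix (Fin d) (Fin d) ℂ) with hVdef
  have hV1 : V * Vᴴ = 1 := by
    rw [← Matrix.star_eq_conjTranspose]
    exact Matrix.mem_unitaryGroup_iff.mp hH.eigenvectorUnitary.2
  have hV2 : Vᴴ * V = 1 := by
    rw [← Matrix.star_eq_conjTranspose]
    exact Matrix.mem_unitaryGroup_iff'.mp hH.eigenvectorUnitary.2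
  have hcan1 : ∀ B : Matrix (Fin d) (Fin d) ℂ, Vᴴ * (V * B) = B := fun B => by
    rw [← Matrix.mul_assoc, hV2, Matrix.one_mul]
  have hcan2 : ∀ B : Matrix (Fin d) (Fin d) ℂ, V * (Vᴴ * B) = B := fun B => by
    rw [← Matrix.mul_assoc, hV1, Matrix.one_mul]
  set g := hH.eigenvalues with hgdef
  have hg : ∀ i, 0 ≤ g i := hS.eigenvalues_nonneg
  have hspec : S = V * Matrix.diagonal (RCLike.ofReal ∘ g) * Vᴴ := hH.spectral_theorem
  have htr : nucNorm A = ∑ i, g i := by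
    rw [nucNorm_eq_sqrt]
    show S.trace.re = _
    rw [hspec, trace_unitary_conj _ _ hV2, Matrix.trace_diagonal]
    simp [Complex.re_sum]
  set T := A * V with hTdef
  set M := Vᴴ * U with hMdef
  have hTT : Tᴴ * T = Matrix.diagonal (fun i => ((g i : ℝ) : ℂ)^2) := by
    have e1 : Tᴴ * T = Vᴴ * ((S * S) * V) := by
      rw [hSsq]
      simp [hTdef, Matrix.conjTranspose_mul, Matrix.mul_assoc]
    rw [e1, hspec]
    simp only [Matrix.mul_assoc, hcan1, hcan2]
    rw [← Matrix.mul_assoc (Matrix.diagonal _), Matrix.diagonal_mul_diagonal]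
    simp only [Matrix.mul_assoc, hcan1, hcan2, hV2, Matrix.mul_one]
    congr 1
    ext i
    simp [pow_two]
  have hMM : M * Mᴴ = 1 := by
    have : M * Mᴴ = Vᴴ * ((U * Uᴴ) * V) := by
      simp [hMdef, Matrix.conjTranspose_mul, Matrix.mul_assoc]
    rw [this, hU1, Matrix.one_mul, hV2]
  have hcol : ∀ i, ∑ j, Complex.normSq (T j i) = (g i)^2 := by
    intro i
    have h1 : (Tᴴ * T) i i = ((∑ j, Complex.normSq (T j i) : ℝ) : ℂ) := by
      simp only [Matrix.mul_apply, Matrix.conjTranspose_apply, Complex.ofReal_sum]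
      congr 1; ext j
      rw [Complex.star_def, Complex.normSq_eq_conj_mul_self]
    rw [hTT] at h1
    simp only [Matrix.diagonal_apply_eq] at h1
    exact_mod_cast h1.symm
  have hrow : ∀ i, ∑ j, Complex.normSq (M i j) = 1 := by
    intro i
    have h1 : (M * Mᴴ) i i = ((∑ j, Complex.normSq (M i j) : ℝ) : ℂ) := by
      simp only [Matrix.mul_apply, Matrix.conjTranspose_apply, Complex.ofReal_sum]
      congr 1; ext j
      rw [Complex.star_def, mul_comm, Complex.normSq_eq_conj_mul_self]
    rw [hMM] at h1
    simp only [Matrix.one_apply_eq] at h1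
    exact_mod_cast h1.symm
  have htrace_eq : (U * A).trace = (M * T).trace := by
    have e : U * A = (U * T) * Vᴴ := by
      simp only [hTdef, ← Matrix.mul_assoc]
      rw [Matrix.mul_assoc (U*A), hV1, Matrix.mul_one]
    rw [e, Matrix.trace_mul_comm, ← Matrix.mul_assoc]
  have hbound : ∀ i, ((M * T) i i).re ≤ g i := by
    intro i
    have h1 : ((M * T) i i).re ≤ ∑ j, ‖M i j‖ * ‖T j i‖ := by
      calc ((M * T) i i).re ≤ ‖(M * T) i i‖ := Complex.re_le_norm _
        _ = ‖∑ j, M i j * T j i‖ := by rw [Matrix.mul_apply]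
        _ ≤ ∑ j, ‖M i j * T j i‖ := norm_sum_le _ _
        _ = ∑ j, ‖M i j‖ * ‖T j i‖ := by
            simp [norm_mul]
    have h2 : (∑ j, ‖M i j‖ * ‖T j i‖)^2
        ≤ (∑ j, ‖M i j‖^2) * (∑ j, ‖T j i‖^2) :=
      Finset.sum_mul_sq_le_sq_mul_sq _ _ _
    have h3 : (∑ j, ‖M i j‖^2) = 1 := by
      simp only [Complex.sq_norm]; exact hrow i
    have h4 : (∑ j, ‖T j i‖^2) = (g i)^2 := by
      simp only [Complex.sq_norm]; exact hcol i
    rw [h3, h4, one_mul] at h2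
    have h5 : (0:ℝ) ≤ ∑ j, ‖M i j‖ * ‖T j i‖ :=
      Finset.sum_nonneg fun j _ => mul_nonneg (norm_nonneg _) (norm_nonneg _)
    nlinarith [hg i, h1]
  calc (U * A).trace.re = ∑ i, ((M * T) i i).re := by
        rw [htrace_eq, Matrix.trace]
        simp [Matrix.diag, Complex.re_sum]
      _ ≤ ∑ i, g i := Finset.sum_le_sum fun i _ => hbound i
      _ = nucNorm A := htr.symm

lemma nucNorm_eq_of_gram_eq {A B : Matrix (Fin d) (Fin d) ℂ} (h : Aᴴ * A = Bᴴ * B) :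
    nucNorm A = nucNorm B := by
  have he : CFC.sqrt (Aᴴ * A) = CFC.sqrt (Bᴴ * B) := by rw [h]
  rw [nucNorm_eq_sqrt, nucNorm_eq_sqrt, he]

lemma nucNorm_smul_real (r : ℝ) (hr : 0 ≤ r) (A : Matrix (Fin d) (Fin d) ℂ) :
    nucNorm ((r : ℂ) • A) = r * nucNorm A := by
  have hP := Matrix.posSemidef_conjTranspose_mul_self A
  set S := CFC.sqrt (Aᴴ * A) with hSdef
  have hS : S.PosSemidef := (CFC.sqrt_nonneg _).posSemidef
  have h1 : ((r : ℂ) • S).PosSemidef := by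
    exact hS.smul (by exact_mod_cast Complex.zero_le_real.mpr hr)
  have h2 : ((r : ℂ) • S) ^ 2 = ((r : ℂ) • A)ᴴ * ((r : ℂ) • A) := by
    rw [pow_two, Matrix.conjTranspose_smul, Matrix.smul_mul, Matrix.mul_smul,
      Matrix.smul_mul, Matrix.mul_smul, smul_smul, smul_smul, CFC.sqrt_mul_sqrt_self _ hP.nonneg]
    congr 1
    simp [Complex.star_def, Complex.conj_ofReal]
  have he : (r : ℂ) • S = CFC.sqrt (((r : ℂ) • A)ᴴ * ((r : ℂ) • A)) :=
    (CFC.sqrt_unique (by rw [← pow_two]; exact h2) h1.nonneg).symm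
  rw [nucNorm_eq_sqrt ((r : ℂ) • A)]
  rw [← he, Matrix.trace_smul, smul_eq_mul, Complex.re_ofReal_mul, nucNorm_eq_sqrt A]

lemma exists_dual_hermitian (H : Matrix (Fin d) (Fin d) ℂ) (hH : H.IsHermitian) :
    ∃ W : Matrix (Fin d) (Fin d) ℂ, W * Wᴴ = 1 ∧ Wᴴ = W ∧
      (W * H).trace = (nucNorm H : ℂ) := by
  set V : Matrix (Fin d) (Fin d) ℂ := (hH.eigenvectorUnitary : Matrix (Fin d) (Fin d) ℂ)
    with hVdef
  have hV1 : V * Vᴴ = 1 := by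
    rw [← Matrix.star_eq_conjTranspose]
    exact Matrix.mem_unitaryGroup_iff.mp hH.eigenvectorUnitary.2
  have hV2 : Vᴴ * V = 1 := by
    rw [← Matrix.star_eq_conjTranspose]
    exact Matrix.mem_unitaryGroup_iff'.mp hH.eigenvectorUnitary.2
  have hcan1 : ∀ B : Matrix (Fin d) (Fin d) ℂ, Vᴴ * (V * B) = B := fun B => by
    rw [← Matrix.mul_assoc, hV2, Matrix.one_mul]
  have hcan2 : ∀ B : Matrix (Fin d) (Fin d) ℂ, V * (Vᴴ * B) = B := fun B => by
    rw [← Matrix.mul_assoc, hV1, Matrix.one_mul]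
  set g := hH.eigenvalues with hgdef
  have hspec : H = V * Matrix.diagonal (RCLike.ofReal ∘ g) * Vᴴ := hH.spectral_theorem
  set sgn : Fin d → ℂ := fun i => if g i < 0 then -1 else 1 with hsgndef
  have hsgn_star : ∀ i, star (sgn i) = sgn i := by
    intro i; simp only [hsgndef]; split <;> simp
  have hsgn_sq : ∀ i, sgn i * sgn i = 1 := by
    intro i; simp only [hsgndef]; split <;> norm_num
  have hsgn_mul : ∀ i, sgn i * ((g i : ℝ) : ℂ) = ((|g i| : ℝ) : ℂ) := by
    intro i
    simp only [hsgndef]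
    split
    · rename_i h
      rw [abs_of_neg h]; push_cast; ring
    · rename_i h
      rw [abs_of_nonneg (not_lt.mp h)]; ring
  -- nucNorm H = ∑ |g i|
  set R : Matrix (Fin d) (Fin d) ℂ :=
    V * Matrix.diagonal (fun i => ((|g i| : ℝ) : ℂ)) * Vᴴ with hRdef
  have hdiagpsd : (Matrix.diagonal (fun i => ((|g i| : ℝ) : ℂ))).PosSemidef :=
    Matrix.posSemidef_diagonal_iff.mpr fun i =>
      Complex.zero_le_real.mpr (abs_nonneg _)
  have hR : R.PosSemidef := hdiagpsd.mul_mul_conjTranspose_same V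
  have hRsq : R ^ 2 = Hᴴ * H := by
    rw [hH.eq, pow_two, hRdef]
    conv_rhs => rw [hspec]
    simp only [Matrix.mul_assoc, hcan1, hcan2]
    rw [← Matrix.mul_assoc (Matrix.diagonal _) (Matrix.diagonal _),
      Matrix.diagonal_mul_diagonal]
    rw [← Matrix.mul_assoc (Matrix.diagonal (RCLike.ofReal ∘ g)),
      Matrix.diagonal_mul_diagonal]
    have hfun : (fun i => ((|g i| : ℝ) : ℂ) * ((|g i| : ℝ) : ℂ))
        = fun i => (RCLike.ofReal ∘ g) i * ((RCLike.ofReal ∘ g) i : ℂ) := by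
      funext i
      simp only [Function.comp_apply]
      rw [show ((|g i| : ℝ) : ℂ) * ((|g i| : ℝ) : ℂ) = ((|g i| * |g i| : ℝ) : ℂ) from
        (Complex.ofReal_mul _ _).symm, abs_mul_abs_self, Complex.ofReal_mul]
      rfl
    rw [hfun]
  have hRsqrt : R = CFC.sqrt (Hᴴ * H) :=
    (CFC.sqrt_unique (by rw [← pow_two]; exact hRsq) hR.nonneg).symm
  have htr : nucNorm H = ∑ i, |g i| := by
    rw [nucNorm_eq_sqrt, ← hRsqrt, hRdef, trace_unitary_conj _ _ hV2, Matrix.trace_diagonal]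
    simp [Complex.re_sum]
  refine ⟨V * Matrix.diagonal sgn * Vᴴ, ?_, ?_, ?_⟩
  · rw [Matrix.conjTranspose_mul, Matrix.conjTranspose_mul,
      Matrix.conjTranspose_conjTranspose, Matrix.diagonal_conjTranspose]
    have hstar : star sgn = sgn := funext hsgn_star
    rw [hstar]
    simp only [Matrix.mul_assoc, hcan1, hcan2]
    rw [← Matrix.mul_assoc (Matrix.diagonal sgn), Matrix.diagonal_mul_diagonal]
    have : (Matrix.diagonal fun i => sgn i * sgn i) = (1 : Matrix (Fin d) (Fin d) ℂ) := by
      rw [show (fun i => sgn i * sgn i) = fun _ => (1:ℂ) from funext hsgn_sq]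
      exact Matrix.diagonal_one
    rw [this, Matrix.one_mul, hV1]
  · rw [Matrix.conjTranspose_mul, Matrix.conjTranspose_mul,
      Matrix.conjTranspose_conjTranspose, Matrix.diagonal_conjTranspose]
    have hstar : star sgn = sgn := funext hsgn_star
    rw [hstar, Matrix.mul_assoc]
  · conv_lhs => rw [hspec]
    have e : V * Matrix.diagonal sgn * Vᴴ * (V * Matrix.diagonal (RCLike.ofReal ∘ g) * Vᴴ)
        = V * (Matrix.diagonal sgn * Matrix.diagonal (RCLike.ofReal ∘ g)) * Vᴴ := by
      simp only [Matrix.mul_assoc, hcan1, hcan2]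
    rw [e, Matrix.diagonal_mul_diagonal, trace_unitary_conj _ _ hV2, Matrix.trace_diagonal,
      htr]
    push_cast
    refine Finset.sum_congr rfl fun i _ => ?_
    exact_mod_cast hsgn_mul i

lemma arith_final (δ ε n m a : ℝ) (hδ0 : 0 ≤ δ) (hδ1 : δ ≤ 1) (hε0 : 0 ≤ ε)
    (hn0 : 0 ≤ n) (ha0 : 0 ≤ a) (hm : 1 - ε ≤ m) (hsum : n + ε ≤ 1 + δ)
    (han : a ≤ n) (hkey : ∀ c s : ℝ, c^2 + s^2 = 1 → c * m + s * a ≤ n) :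
    a ≤ 3 * Real.sqrt δ := by
  have hsq0 : 0 ≤ Real.sqrt δ := Real.sqrt_nonneg δ
  by_cases hcase : 1 ≤ ε
  · have h1 : a ≤ δ := by linarith
    have h2 : δ ≤ Real.sqrt δ := by
      have h := Real.sqrt_le_sqrt (show δ^2 ≤ δ by nlinarith)
      rwa [Real.sqrt_sq hδ0] at h
    linarith
  · push_neg at hcase
    have hm0 : 0 < m := by linarith
    set r := Real.sqrt (m^2 + a^2) with hrdef
    have hr2 : r^2 = m^2 + a^2 := Real.sq_sqrt (by positivity)
    have hr0 : 0 < r := Real.sqrt_pos.mpr (by positivity)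
    have hcs : (m/r)^2 + (a/r)^2 = 1 := by
      field_simp
      linarith [hr2]
    have hrn : r ≤ n := by
      have h := hkey (m/r) (a/r) hcs
      have e : (m/r) * m + (a/r) * a = r := by
        field_simp
        nlinarith [hr2]
      linarith [h, e.symm.le]
    have hsq : a^2 ≤ 9 * δ := by
      nlinarith [hr2, hrn, hm, hε0, hδ1, hn0, hm0.le, ha0]
    have h3 : a ≤ Real.sqrt (9 * δ) := by
      rw [← Real.sqrt_sq ha0]
      exact Real.sqrt_le_sqrt hsq
    rwa [show (9:ℝ) * δ = 3^2 * δ by ring, Real.sqrt_mul (by positivity),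
      Real.sqrt_sq (by norm_num)] at h3

/-- If `σ` is positive semidefinite with trace `1`, `0 ≤ δ ≤ 1`, and
`‖X‖₁ + ‖σ - X‖₁ ≤ 1 + δ`, then `X` is `3√δ`-close in nuclear norm to its Hermitian part. -/
theorem close_to_hermitian_part {d : ℕ} (σ X : Matrix (Fin d) (Fin d) ℂ)
    (hσ : σ.PosSemidef) (hσtr : σ.trace = 1) (δ : ℝ) (hδ0 : 0 ≤ δ) (hδ1 : δ ≤ 1)
    (hX : nucNorm X + nucNorm (σ - X) ≤ 1 + δ) :
    nucNorm (X - ((2 : ℂ)⁻¹ • (X + Xᴴ))) ≤ 3 * Real.sqrt δ := by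
  have hhalf : (((2:ℝ)⁻¹ : ℝ) : ℂ) = (2:ℂ)⁻¹ := by norm_num
  set K : Matrix (Fin d) (Fin d) ℂ := X - Xᴴ with hKdef
  have hrw : X - ((2 : ℂ)⁻¹ • (X + Xᴴ)) = (((2:ℝ)⁻¹ : ℝ) : ℂ) • K := by
    rw [hhalf, hKdef]; module
  rw [hrw, nucNorm_smul_real _ (by norm_num)]
  set k := nucNorm K with hkdef
  have hk0 : 0 ≤ k := nucNorm_nonneg K
  -- Hermitian matrix I•K and its dual witness
  have hHherm : (Complex.I • K).IsHermitian := by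
    show (Complex.I • K)ᴴ = Complex.I • K
    rw [Matrix.conjTranspose_smul, hKdef, Matrix.conjTranspose_sub,
      Matrix.conjTranspose_conjTranspose]
    rw [show star Complex.I = -Complex.I from by simp]
    module
  have hnucH : nucNorm (Complex.I • K) = k := by
    refine nucNorm_eq_of_gram_eq ?_
    rw [Matrix.conjTranspose_smul, Matrix.smul_mul, Matrix.mul_smul, smul_smul]
    rw [show star Complex.I = -Complex.I from by simp]
    simp
  obtain ⟨W, hW1, hWh, hWtr⟩ := exists_dual_hermitian _ hHherm
  rw [hnucH] at hWtr
  have hWW : W * W = 1 := by rw [hWh] at hW1; exact hW1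
  have hWK : (W * K).trace = -Complex.I * (k : ℂ) := by
    have e : K = (-Complex.I) • (Complex.I • K) := by
      rw [smul_smul]; simp
    rw [e, Matrix.mul_smul, Matrix.trace_smul, hWtr, smul_eq_mul]
  have hXhherm : (X + Xᴴ)ᴴ = X + Xᴴ := by
    rw [Matrix.conjTranspose_add, Matrix.conjTranspose_conjTranspose, add_comm]
  have htreal : ((W * (X + Xᴴ)).trace).im = 0 := by
    have h1 : (starRingEnd ℂ) ((W * (X + Xᴴ)).trace) = (W * (X + Xᴴ)).trace := by
      have h2 : ((W * (X + Xᴴ))ᴴ).trace = star ((W * (X + Xᴴ)).trace) :=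
        Matrix.trace_conjTranspose _
      rw [Matrix.conjTranspose_mul, hXhherm, hWh, Matrix.trace_mul_comm] at h2
      exact h2.symm
    exact Complex.conj_eq_iff_im.mp h1
  have hsplit : W * X = (((2:ℝ)⁻¹ : ℝ) : ℂ) • (W * (X + Xᴴ))
      + (((2:ℝ)⁻¹ : ℝ) : ℂ) • (W * K) := by
    rw [← Matrix.mul_smul, ← Matrix.mul_smul, ← Matrix.mul_add]
    congr 1
    rw [hKdef, hhalf]
    module
  -- the key family of inequalities
  have hkey : ∀ c s : ℝ, c^2 + s^2 = 1 →
      c * (X.trace).re + s * (2⁻¹ * k) ≤ nucNorm X := by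
    intro c s hcs
    set U : Matrix (Fin d) (Fin d) ℂ :=
      (c:ℂ) • (1 : Matrix (Fin d) (Fin d) ℂ) + ((s:ℂ) * Complex.I) • W with hUdef
    have hUadj : Uᴴ = (c:ℂ) • (1 : Matrix (Fin d) (Fin d) ℂ)
        + (-((s:ℂ) * Complex.I)) • W := by
      rw [hUdef, Matrix.conjTranspose_add, Matrix.conjTranspose_smul,
        Matrix.conjTranspose_smul, Matrix.conjTranspose_one, hWh]
      congr 1
      · congr 1
        simp [Complex.ext_iff]
      · congr 1
        simp [Complex.ext_iff]
    have hUU : U * Uᴴ = 1 := by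
      have hexp : U * Uᴴ = ((c:ℂ) * (c:ℂ) - ((s:ℂ) * Complex.I) * ((s:ℂ) * Complex.I)) •
          (1 : Matrix (Fin d) (Fin d) ℂ) := by
        rw [hUadj, hUdef]
        simp only [Matrix.add_mul, Matrix.mul_add, Matrix.smul_mul, Matrix.mul_smul,
          smul_smul, Matrix.one_mul, Matrix.mul_one, hWW]
        module
      rw [hexp]
      have hco : (c:ℂ) * (c:ℂ) - ((s:ℂ) * Complex.I) * ((s:ℂ) * Complex.I) = 1 := by
        have h2 : ((c^2 + s^2 : ℝ) : ℂ) = 1 := by rw [hcs]; norm_num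
        push_cast at h2
        have hI : Complex.I * Complex.I = -1 := Complex.I_mul_I
        linear_combination h2 - (s:ℂ)^2 * hI
      rw [hco, one_smul]
    have hle := re_trace_mul_le_nucNorm U X hUU
    have htrU : ((U * X).trace).re = c * (X.trace).re + s * (2⁻¹ * k) := by
      have e1 : U * X = (c:ℂ) • X + ((s:ℂ) * Complex.I) • (W * X) := by
        rw [hUdef, Matrix.add_mul, Matrix.smul_mul, Matrix.smul_mul, Matrix.one_mul]
      have e2 : (W * X).trace = (((2:ℝ)⁻¹ : ℝ) : ℂ) * (W * (X + Xᴴ)).trace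
          + (((2:ℝ)⁻¹ : ℝ) : ℂ) * (-Complex.I * (k:ℂ)) := by
        rw [hsplit, Matrix.trace_add, Matrix.trace_smul, Matrix.trace_smul, hWK,
          smul_eq_mul, smul_eq_mul]
      rw [e1, Matrix.trace_add, Matrix.trace_smul, Matrix.trace_smul, e2]
      simp only [smul_eq_mul, Complex.add_re, Complex.mul_re, Complex.mul_im,
        Complex.ofReal_re, Complex.ofReal_im, Complex.I_re, Complex.I_im, Complex.add_im,
        Complex.neg_re, Complex.neg_im, htreal]
      push_cast
      ring
    rw [htrU] at hle
    exact hle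
  -- scalar inequalities
  have ha0 : 0 ≤ 2⁻¹ * k := by linarith
  have hn0 : 0 ≤ nucNorm X := nucNorm_nonneg X
  have hε0 : 0 ≤ nucNorm (σ - X) := nucNorm_nonneg _
  have hm : 1 - nucNorm (σ - X) ≤ (X.trace).re := by
    have h1 := re_trace_mul_le_nucNorm 1 (σ - X) (by simp)
    rw [Matrix.one_mul, Matrix.trace_sub, hσtr] at h1
    simp only [Complex.sub_re, Complex.one_re] at h1
    linarith
  have han : 2⁻¹ * k ≤ nucNorm X := by
    have h01 := hkey 0 1 (by norm_num)
    rw [zero_mul, one_mul, zero_add] at h01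
    exact h01
  exact arith_final δ (nucNorm (σ - X)) (nucNorm X) (X.trace).re (2⁻¹ * k)
    hδ0 hδ1 hε0 hn0 ha0 hm hX han hkey
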